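/- arXiv:2012.06792 — 2 statements merged into one kernel-verified Lean document; each statement's English description precedes it below -/
import Mathlib

section
/- Let (M,g) be a compact Riemannian manifold, H a 3-form, λ ∈ ℝ, and f a smooth function with ∫_M e^{-f} dV_g = 1, satisfying both equations: (i) R_g + Δf − (1/4)|H|²_g = 0 pointwise, and (ii) 2Δf − |df|²_g + R_g − (1/12)|H|²_g = λ pointwise. Then (1/6)∫_M |H|²_g e^{-f} dV_g = λ. In particular, if λ ≤ 0 then H = 0 and f satisfies Δf − |df|²_g = 0. -/
open MeasureTheory

/- STATEMENT 8: (M,g) compact Riemannian, H a 3-form (entering only through its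
pointwise norm squared `Hsq = |H|²_g ≥ 0`), λ ∈ ℝ, f smooth with
`∫ e^{-f} dV = 1`, satisfying (i) `R + Δf - (1/4)|H|² = 0` and
(ii) `2Δf - |df|² + R - (1/12)|H|² = λ` pointwise.  Then
`(1/6)∫ |H|² e^{-f} dV = λ`; in particular if λ ≤ 0 then `H = 0`
(i.e. `|H|²_g ≡ 0`) and `Δf - |df|² = 0`.
The Riemannian data is abstracted together with its relevant properties
(divergence theorem, chain rule for Δ, continuity of smooth functions,
positivity of the volume measure on open sets). -/
theorem stmt8
    {M : Type*} [TopologicalSpace M] [CompactSpace M]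
    [MeasurableSpace M] [BorelSpace M]
    (vol : Measure M) [IsFiniteMeasure vol]
    (hvolpos : ∀ U : Set M, IsOpen U → U.Nonempty → 0 < vol U)
    (Smooth : (M → ℝ) → Prop)
    (lap gradSq : (M → ℝ) → M → ℝ)
    (hdiv : ∀ u, Smooth u → ∫ x, lap u x ∂vol = 0)
    (hsmooth_exp : ∀ u, Smooth u → Smooth fun x => Real.exp (-(u x)))
    (hchain : ∀ u, Smooth u → ∀ x,
      lap (fun y => Real.exp (-(u y))) x
        = (gradSq u x - lap u x) * Real.exp (-(u x)))
    (hcont : ∀ u, Smooth u → Continuous u)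
    (R Hsq : M → ℝ) (hHc : Continuous Hsq) (hHnn : ∀ x, 0 ≤ Hsq x)
    (l : ℝ) (f : M → ℝ) (hf : Smooth f)
    (hnorm : ∫ x, Real.exp (-(f x)) ∂vol = 1)
    (h1 : ∀ x, R x + lap f x - (1 / 4) * Hsq x = 0)
    (h2 : ∀ x, 2 * lap f x - gradSq f x + R x - (1 / 12) * Hsq x = l) :
    (1 / 6) * ∫ x, Hsq x * Real.exp (-(f x)) ∂vol = l ∧
    (l ≤ 0 → (∀ x, Hsq x = 0) ∧ ∀ x, lap f x - gradSq f x = 0) := by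
  -- continuous functions are integrable on a compact space with finite measure
  have integ : ∀ g : M → ℝ, Continuous g → Integrable g vol := by
    intro g hg
    obtain ⟨C, hC⟩ := (isCompact_univ.image hg).isBounded.exists_norm_le
    refine ⟨hg.aestronglyMeasurable, HasFiniteIntegral.of_bounded (C := C) ?_⟩
    filter_upwards with x
    exact hC _ ⟨x, trivial, rfl⟩
  have hfc : Continuous f := hcont f hf
  have hec : Continuous fun x => Real.exp (-(f x)) :=
    Real.continuous_exp.comp hfc.neg
  have hecpos : ∀ x, 0 < Real.exp (-(f x)) := fun x => Real.exp_pos _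
  -- pointwise identity: gradSq f - lap f = (1/6) Hsq - l
  have hpt : ∀ x, gradSq f x - lap f x = (1 / 6) * Hsq x - l := fun x => by
    have := h1 x; have := h2 x; linarith
  -- the key integral identity from the divergence theorem and chain rule
  have h0 : ∫ x, ((1 / 6) * Hsq x - l) * Real.exp (-(f x)) ∂vol = 0 := by
    have := hdiv _ (hsmooth_exp f hf)
    rw [← this]
    refine integral_congr_ae (Filter.Eventually.of_forall fun x => ?_)
    rw [hchain f hf x, hpt x]
  have hintH : Integrable (fun x => Hsq x * Real.exp (-(f x))) vol :=
    integ _ (hHc.mul hec)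
  have hinte : Integrable (fun x => Real.exp (-(f x))) vol := integ _ hec
  have hsplit : (1 / 6) * (∫ x, Hsq x * Real.exp (-(f x)) ∂vol)
      - l * (∫ x, Real.exp (-(f x)) ∂vol) = 0 := by
    rw [← integral_const_mul, ← integral_const_mul, ← integral_sub
      (hintH.const_mul _) (hinte.const_mul _), ← h0]
    refine integral_congr_ae (Filter.Eventually.of_forall fun x => ?_)
    ring
  rw [hnorm] at hsplit
  have hmain : (1 / 6) * ∫ x, Hsq x * Real.exp (-(f x)) ∂vol = l := by linarith
  refine ⟨hmain, fun hl => ?_⟩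
  -- nonnegativity of the integral forces l = 0
  have hInn : 0 ≤ ∫ x, Hsq x * Real.exp (-(f x)) ∂vol :=
    integral_nonneg fun x => mul_nonneg (hHnn x) (hecpos x).le
  have hl0 : l = 0 := le_antisymm hl (by linarith)
  have hI0 : ∫ x, Hsq x * Real.exp (-(f x)) ∂vol = 0 := by linarith
  -- hence Hsq * e^{-f} = 0 a.e., and by continuity and positivity of vol, everywhere
  have hae : (fun x => Hsq x * Real.exp (-(f x))) =ᵐ[vol] 0 :=
    (integral_eq_zero_iff_of_nonneg
      (fun x => mul_nonneg (hHnn x) (hecpos x).le) hintH).mp hI0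
  have hH0 : ∀ x, Hsq x = 0 := by
    intro x
    by_contra hx
    have hxpos : 0 < Hsq x := lt_of_le_of_ne (hHnn x) (Ne.symm hx)
    set U : Set M := {y | 0 < Hsq y * Real.exp (-(f y))} with hU
    have hUopen : IsOpen U := isOpen_lt continuous_const (hHc.mul hec)
    have hUne : U.Nonempty := ⟨x, mul_pos hxpos (hecpos x)⟩
    have hUpos := hvolpos U hUopen hUne
    have : vol U = 0 := by
      refine measure_mono_null (fun y hy => ?_) hae
      intro hy0
      have hy : 0 < Hsq y * Real.exp (-(f y)) := hy
      simp only [Set.mem_setOf_eq, Pi.zero_apply] at hy0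
      exact absurd hy0 (ne_of_gt hy)
    exact absurd this (ne_of_gt hUpos)
  exact ⟨hH0, fun x => by have := hpt x; have := hH0 x; linarith⟩
end

section
/- Let (M,g) be a compact Riemannian manifold, H a 3-form, λ ∈ ℝ, and f a smooth function with ∫_M e^{-f} dV_g = 1 satisfying the full critical point equations: Rc_g + Hess_g f − (1/4)H² = 0 as symmetric 2-tensors, and 2Δf − |df|²_g + R_g − (1/12)|H|²_g = λ, with λ ≤ 0. Then H = 0, f is constant, and g is Ricci-flat. -/
open MeasureTheory

open scoped Matrix in
lemma psd_trace_zero {n : ℕ} {A : Matrix (Fin n) (Fin n) ℝ} (h : A.PosSemidef)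
    (ht : A.trace = 0) : A = 0 := by
  exact h.trace_eq_zero_iff.mp ht

lemma cont_integrable_aux {M : Type*} [TopologicalSpace M] [CompactSpace M]
    [MeasurableSpace M] [BorelSpace M] (vol : Measure M) [IsFiniteMeasure vol]
    {u : M → ℝ} (hu : Continuous u) : Integrable u vol :=
  hu.integrable_of_hasCompactSupport (HasCompactSupport.of_compactSpace u)

lemma cont_nonneg_int_zero {M : Type*} [TopologicalSpace M] [CompactSpace M]
    [MeasurableSpace M] [BorelSpace M] (vol : Measure M) [IsFiniteMeasure vol]
    (hvolpos : ∀ U : Set M, IsOpen U → U.Nonempty → 0 < vol U)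
    {u : M → ℝ} (hu : Continuous u) (hnn : ∀ x, 0 ≤ u x)
    (hint : ∫ x, u x ∂vol = 0) : ∀ x, u x = 0 := by
  have hae : u =ᵐ[vol] 0 :=
    (integral_eq_zero_iff_of_nonneg hnn (cont_integrable_aux vol hu)).mp hint
  intro x
  by_contra hx
  have hxpos : 0 < u x := lt_of_le_of_ne (hnn x) (Ne.symm hx)
  set U : Set M := u ⁻¹' Set.Ioi (u x / 2) with hU
  have hUopen : IsOpen U := isOpen_Ioi.preimage hu
  have hUne : U.Nonempty := ⟨x, by simp [hU]; linarith⟩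
  have hUpos := hvolpos U hUopen hUne
  have hsub : U ⊆ {y | u y ≠ 0} := fun y hy => by
    have : u x / 2 < u y := hy
    intro h0; rw [h0] at this; linarith
  have : vol {y | u y ≠ 0} = 0 := by
    have := hae
    rw [Filter.EventuallyEq, ae_iff] at this
    simpa using this
  have hle : vol U ≤ vol {y | u y ≠ 0} := measure_mono hsub
  rw [this] at hle
  exact absurd (lt_of_lt_of_le hUpos hle) (lt_irrefl 0)

theorem stmt9
    {M : Type*} [TopologicalSpace M] [CompactSpace M]
    [MeasurableSpace M] [BorelSpace M]
    (vol : Measure M) [IsFiniteMeasure vol]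
    (hvolpos : ∀ U : Set M, IsOpen U → U.Nonempty → 0 < vol U)
    (Smooth : (M → ℝ) → Prop)
    (lap gradSq : (M → ℝ) → M → ℝ)
    (hdiv : ∀ u, Smooth u → ∫ x, lap u x ∂vol = 0)
    (hsmooth_exp : ∀ u, Smooth u → Smooth fun x => Real.exp (-(u x)))
    (hchain : ∀ u, Smooth u → ∀ x,
      lap (fun y => Real.exp (-(u y))) x
        = (gradSq u x - lap u x) * Real.exp (-(u x)))
    (hcont : ∀ u, Smooth u → Continuous u)
    (hharm : ∀ u, Smooth u → (∀ x, lap u x = 0) → ∃ c, ∀ x, u x = c)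
    {n : ℕ}
    (RcM HsqM : M → Matrix (Fin n) (Fin n) ℝ)
    (HessM : (M → ℝ) → M → Matrix (Fin n) (Fin n) ℝ)
    (R Hsq : M → ℝ) (hHc : Continuous Hsq) (hHnn : ∀ x, 0 ≤ Hsq x)
    (htrRc : ∀ x, R x = (RcM x).trace)
    (htrHsq : ∀ x, (HsqM x).trace = 6 * Hsq x)
    (hpsd : ∀ x, (HsqM x).PosSemidef)
    (l : ℝ) (hl : l ≤ 0) (f : M → ℝ) (hf : Smooth f)
    (htrHess : ∀ x, lap f x = (HessM f x).trace)
    (hHessconst : ∀ c : ℝ, (∀ x, f x = c) → ∀ x, HessM f x = 0)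
    (hnorm : ∫ x, Real.exp (-(f x)) ∂vol = 1)
    (htensor : ∀ x, RcM x + HessM f x - (1 / 4 : ℝ) • HsqM x = 0)
    (h2 : ∀ x, 2 * lap f x - gradSq f x + R x - (1 / 12) * Hsq x = l) :
    (∀ x, Hsq x = 0 ∧ HsqM x = 0) ∧ (∃ c, ∀ x, f x = c) ∧ ∀ x, RcM x = 0 := by
  -- trace of the tensor equation
  have hR : ∀ x, R x + lap f x - (3/2) * Hsq x = 0 := by
    intro x
    have h := congrArg Matrix.trace (htensor x)
    rw [Matrix.trace_sub, Matrix.trace_add, Matrix.trace_smul, htrHsq x,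
      Matrix.trace_zero] at h
    rw [htrRc x, htrHess x]
    rw [smul_eq_mul] at h
    linarith
  have key : ∀ x, gradSq f x - lap f x = (17/12) * Hsq x - l := by
    intro x
    have ha := h2 x
    have hb := hR x
    linarith
  set e : M → ℝ := fun x => Real.exp (-(f x)) with he
  have hse : Smooth e := hsmooth_exp f hf
  have hce : Continuous e := hcont _ hse
  have hepos : ∀ x, 0 < e x := fun x => Real.exp_pos _
  have hlape : ∀ x, lap e x = ((17/12) * Hsq x - l) * e x := by
    intro x
    rw [hchain f hf x, key x]
  have hint0 : ∫ x, ((17/12) * Hsq x - l) * e x ∂vol = 0 := by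
    have h0 := hdiv _ hse
    calc ∫ x, ((17/12) * Hsq x - l) * e x ∂vol
        = ∫ x, lap e x ∂vol :=
          integral_congr_ae (Filter.Eventually.of_forall fun x => (hlape x).symm)
      _ = 0 := h0
  have hφc : Continuous fun x => Hsq x * e x := hHc.mul hce
  have hφint : Integrable (fun x => Hsq x * e x) vol := cont_integrable_aux vol hφc
  have heint : Integrable e vol := cont_integrable_aux vol hce
  have hsplit : (17/12) * (∫ x, Hsq x * e x ∂vol) - l = 0 := by
    have : ∫ x, ((17/12) * Hsq x - l) * e x ∂vol
        = ∫ x, ((17/12) * (Hsq x * e x) - l * e x) ∂vol :=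
      integral_congr_ae (Filter.Eventually.of_forall fun x => by ring)
    rw [this, integral_sub (hφint.const_mul _) (heint.const_mul _),
      integral_const_mul, integral_const_mul, hnorm] at hint0
    linarith
  have hInn : 0 ≤ ∫ x, Hsq x * e x ∂vol :=
    integral_nonneg fun x => mul_nonneg (hHnn x) (hepos x).le
  have hl0 : l = 0 := le_antisymm hl (by linarith)
  have hI0 : ∫ x, Hsq x * e x ∂vol = 0 := by linarith
  have hφ0 : ∀ x, Hsq x * e x = 0 :=
    cont_nonneg_int_zero vol hvolpos hφc
      (fun x => mul_nonneg (hHnn x) (hepos x).le) hI0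
  have hHsq0 : ∀ x, Hsq x = 0 := fun x =>
    (mul_eq_zero.mp (hφ0 x)).resolve_right (hepos x).ne'
  have hHsqM0 : ∀ x, HsqM x = 0 := fun x =>
    psd_trace_zero (hpsd x) (by rw [htrHsq x, hHsq0 x]; ring)
  have hlape0 : ∀ x, lap e x = 0 := fun x => by
    rw [hlape x, hHsq0 x, hl0]; ring
  obtain ⟨c, hc⟩ := hharm e hse hlape0
  have hfconst : ∀ x, f x = -Real.log c := by
    intro x
    have : Real.log (e x) = Real.log c := by rw [hc x]
    rw [he] at this
    simp only [Real.log_exp] at this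
    linarith
  refine ⟨fun x => ⟨hHsq0 x, hHsqM0 x⟩, ⟨-Real.log c, hfconst⟩, ?_⟩
  intro x
  have hHess0 : HessM f x = 0 := hHessconst _ hfconst x
  have ht := htensor x
  rw [hHess0, hHsqM0 x] at ht
  simpa using ht
end
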